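/- Let g > 0, let σ₃ : ℝ → ℝ be a saturation function with linear bound L₃ and saturation bound M₃ (0 < L₃ ≤ M₃), let f₁ : ℝ → ℝ be continuous, let ε : ℝ → ℝ satisfy |ε(t)| ≤ 1 for all t, let u_d : ℝ → ℝ be continuously differentiable, and let u : ℝ → ℝ be differentiable satisfying u'(t) = f₁(t) + T(t) - g·√(1 - ε(t)²) for all t ≥ 0, where T(t) = -σ₃(u(t) - u_d(t)) + g·√(1 - ε(t)²) - f₁(t) + u_d'(t). Then the tracking error x₁ = u - u_d satisfies x₁'(t) = -σ₃(x₁(t)) for all t ≥ 0, and consequently u(t) - u_d(t) → 0 as t → ∞. -/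

import Mathlib

open Real Filter

/-- A saturation function with linear bound `L` and saturation bound `M`. -/
def IsSaturation (L M : ℝ) (σ : ℝ → ℝ) : Prop :=
  Continuous σ ∧ Monotone σ ∧ (∀ s : ℝ, s ≠ 0 → 0 < s * σ s) ∧
  (∀ s : ℝ, |σ s| ≤ M) ∧ (∀ s : ℝ, |s| ≤ L → σ s = s)

theorem thrust_controller_tracking
    (g : ℝ) (hg : 0 < g)
    (L₃ M₃ : ℝ) (hL₃ : 0 < L₃) (hLM₃ : L₃ ≤ M₃)
    (σ₃ : ℝ → ℝ) (hσ₃ : IsSaturation L₃ M₃ σ₃)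
    (f₁ : ℝ → ℝ) (hf₁ : Continuous f₁)
    (ε : ℝ → ℝ) (hε : ∀ t : ℝ, |ε t| ≤ 1)
    (ud : ℝ → ℝ) (hud : ContDiff ℝ 1 ud)
    (u : ℝ → ℝ) (hu : Differentiable ℝ u)
    (T : ℝ → ℝ)
    (hT : ∀ t : ℝ, T t = -σ₃ (u t - ud t) + g * Real.sqrt (1 - ε t ^ 2)
        - f₁ t + deriv ud t)
    (hode : ∀ t : ℝ, 0 ≤ t →
        deriv u t = f₁ t + T t - g * Real.sqrt (1 - ε t ^ 2)) :
    (∀ t : ℝ, 0 ≤ t →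
        deriv (fun s => u s - ud s) t = -σ₃ (u t - ud t)) ∧
    Tendsto (fun t => u t - ud t) atTop (nhds 0) := by
  obtain ⟨hσc, hσmono, hσpos, hσM, hσL⟩ := hσ₃
  set x : ℝ → ℝ := fun s => u s - ud s with hxdef
  have hud_diff : Differentiable ℝ ud := hud.differentiable one_ne_zero
  have hx_diff : Differentiable ℝ x := hu.sub hud_diff
  -- derivative of x
  have hx' : ∀ t : ℝ, 0 ≤ t → deriv x t = -σ₃ (x t) := by
    intro t ht
    have h1 : deriv x t = deriv u t - deriv ud t :=
      deriv_sub (hu t) (hud_diff t)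
    rw [h1, hode t ht, hT t]
    ring_nf
    rfl
  -- basic facts about σ₃
  have hσ0 : σ₃ 0 = 0 := hσL 0 (by simpa using hL₃.le)
  have hsσ : ∀ s : ℝ, 0 ≤ s * σ₃ s := by
    intro s
    rcases eq_or_ne s 0 with h | h
    · simp [h, hσ0]
    · exact (hσpos s h).le
  have hσLval : σ₃ L₃ = L₃ := hσL L₃ (by rw [abs_of_pos hL₃])
  have hσnLval : σ₃ (-L₃) = -L₃ := hσL (-L₃) (by rw [abs_neg, abs_of_pos hL₃])
  -- lower bound when |s| ≥ L₃
  have hbig : ∀ s : ℝ, L₃ ≤ |s| → L₃ ^ 2 ≤ s * σ₃ s := by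
    intro s hs
    rcases abs_cases s with ⟨h1, h2⟩ | ⟨h1, h2⟩
    · have hLs : L₃ ≤ s := h1 ▸ hs
      have : L₃ ≤ σ₃ s := hσLval ▸ hσmono hLs
      nlinarith
    · have hLs : s ≤ -L₃ := by linarith [h1 ▸ hs]
      have : σ₃ s ≤ -L₃ := hσnLval ▸ hσmono hLs
      nlinarith
  -- Lyapunov function
  set V : ℝ → ℝ := fun t => x t ^ 2 with hVdef
  have hVd : ∀ t : ℝ, HasDerivAt V (2 * x t * deriv x t) t := by
    intro t
    have := ((hx_diff t).hasDerivAt).pow 2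
    show HasDerivAt (x ^ 2) (2 * x t * deriv x t) t
    simpa [mul_comm, mul_assoc, mul_left_comm] using this
  have hV_diff : Differentiable ℝ V := fun t => (hVd t).differentiableAt
  have hVderiv : ∀ t : ℝ, deriv V t = 2 * x t * deriv x t := fun t => (hVd t).deriv
  have hVnonneg : ∀ t : ℝ, 0 ≤ V t := fun t => sq_nonneg _
  -- V is antitone on [0, ∞)
  have hVanti : AntitoneOn V (Set.Ici 0) := by
    apply antitoneOn_of_deriv_nonpos (convex_Ici 0) hV_diff.continuous.continuousOn
      (hV_diff.differentiableOn)
    intro t ht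
    rw [interior_Ici] at ht
    have ht0 : (0:ℝ) ≤ t := le_of_lt ht
    rw [hVderiv t, hx' t ht0]
    have := hsσ (x t)
    nlinarith
  -- there is t₁ ≥ 0 with V t₁ ≤ L₃²
  have hB : ∃ t₁ : ℝ, 0 ≤ t₁ ∧ V t₁ ≤ L₃ ^ 2 := by
    by_contra hcon
    push_neg at hcon
    set h : ℝ → ℝ := fun t => V t + 2 * L₃ ^ 2 * t with hhdef
    have hh_diff : Differentiable ℝ h := hV_diff.add (by fun_prop)
    have hhanti : AntitoneOn h (Set.Ici 0) := by
      apply antitoneOn_of_deriv_nonpos (convex_Ici 0) hh_diff.continuous.continuousOn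
        hh_diff.differentiableOn
      intro t ht
      rw [interior_Ici] at ht
      have ht0 : (0:ℝ) ≤ t := le_of_lt ht
      have hhd : HasDerivAt h (2 * x t * deriv x t + 2 * L₃ ^ 2) t := by
        have := (hVd t).add ((hasDerivAt_id t).const_mul (2 * L₃ ^ 2))
        simp only [mul_one] at this
        exact this
      have hd : deriv h t = 2 * x t * deriv x t + 2 * L₃ ^ 2 := hhd.deriv
      have habs : L₃ ≤ |x t| := by
        have := hcon t ht0
        have h2 : L₃ ^ 2 < |x t| ^ 2 := by rwa [sq_abs]
        nlinarith [abs_nonneg (x t), hL₃.le]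
      have hlow := hbig (x t) habs
      rw [hd, hx' t ht0]
      nlinarith
    set Tb : ℝ := V 0 / (2 * L₃ ^ 2) + 1 with hTbdef
    have hTbpos : 0 < Tb := by positivity
    have := hhanti (Set.self_mem_Ici) (Set.mem_Ici.mpr hTbpos.le) hTbpos.le
    have hVT : V Tb + 2 * L₃ ^ 2 * Tb ≤ V 0 := by simpa [hhdef] using this
    have h2L : (0:ℝ) < 2 * L₃ ^ 2 := by positivity
    have : 2 * L₃ ^ 2 * Tb = V 0 + 2 * L₃ ^ 2 := by
      rw [hTbdef]; field_simp
    nlinarith [hVnonneg Tb]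
  obtain ⟨t₁, ht₁, hVt₁⟩ := hB
  -- exponential decay after t₁
  set φ : ℝ → ℝ := fun t => Real.exp (2 * t) * V t with hφdef
  have hφd : ∀ t : ℝ, HasDerivAt φ
      (Real.exp (2 * t) * 2 * V t + Real.exp (2 * t) * (2 * x t * deriv x t)) t := by
    intro t
    have h1 : HasDerivAt (fun t : ℝ => Real.exp (2 * t)) (Real.exp (2 * t) * 2) t := by
      have := ((hasDerivAt_id t).const_mul 2).exp
      simpa [mul_comm] using this
    exact h1.mul (hVd t)
  have hφ_diff : Differentiable ℝ φ := fun t => (hφd t).differentiableAt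
  have hφanti : AntitoneOn φ (Set.Ici t₁) := by
    apply antitoneOn_of_deriv_nonpos (convex_Ici t₁) hφ_diff.continuous.continuousOn
      hφ_diff.differentiableOn
    intro t ht
    rw [interior_Ici] at ht
    have ht0 : (0:ℝ) ≤ t := le_trans ht₁ ht.le
    have hVle : V t ≤ L₃ ^ 2 :=
      le_trans (hVanti (Set.mem_Ici.mpr ht₁) (Set.mem_Ici.mpr ht0) ht.le) hVt₁
    have hxle : |x t| ≤ L₃ := by
      have : |x t| ^ 2 ≤ L₃ ^ 2 := by rwa [sq_abs]
      nlinarith [abs_nonneg (x t), hL₃.le]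
    have hσeq : σ₃ (x t) = x t := hσL (x t) hxle
    rw [(hφd t).deriv, hx' t ht0, hσeq]
    have : Real.exp (2 * t) * 2 * V t + Real.exp (2 * t) * (2 * x t * -(x t)) = 0 := by
      rw [hVdef]; ring
    linarith [this.le]
  -- V t ≤ C * exp (-2 t) for t ≥ t₁
  set C : ℝ := Real.exp (2 * t₁) * V t₁ with hCdef
  have hVbound : ∀ t : ℝ, t₁ ≤ t → V t ≤ C * Real.exp (-(2 * t)) := by
    intro t ht
    have := hφanti (Set.self_mem_Ici) (Set.mem_Ici.mpr ht) ht
    have hφle : Real.exp (2 * t) * V t ≤ C := this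
    have hepos : 0 < Real.exp (2 * t) := Real.exp_pos _
    rw [Real.exp_neg]
    calc V t = Real.exp (2 * t) * V t * (Real.exp (2 * t))⁻¹ := by
          field_simp
      _ ≤ C * (Real.exp (2 * t))⁻¹ := by
          apply mul_le_mul_of_nonneg_right hφle (by positivity)
  -- V → 0
  have hVtend : Tendsto V atTop (nhds 0) := by
    have hub : Tendsto (fun t : ℝ => C * Real.exp (-(2 * t))) atTop (nhds 0) := by
      have : Tendsto (fun t : ℝ => -(2 * t)) atTop atBot :=
        tendsto_neg_atTop_atBot.comp (tendsto_id.const_mul_atTop two_pos)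
      have := Real.tendsto_exp_atBot.comp this
      simpa using this.const_mul C
    apply tendsto_of_tendsto_of_tendsto_of_le_of_le' tendsto_const_nhds hub
    · exact Eventually.of_forall hVnonneg
    · filter_upwards [eventually_ge_atTop t₁] with t ht
      exact hVbound t ht
  -- conclude x → 0
  have hxtend : Tendsto x atTop (nhds 0) := by
    rw [tendsto_zero_iff_abs_tendsto_zero]
    have : Tendsto (fun t => Real.sqrt (V t)) atTop (nhds (Real.sqrt 0)) :=
      (Real.continuous_sqrt.continuousAt).tendsto.comp hVtend
    rw [Real.sqrt_zero] at this
    convert this using 1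
    ext t
    rw [hVdef]
    exact (Real.sqrt_sq_eq_abs (x t)).symm
  exact ⟨hx', hxtend⟩
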